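/- arXiv:1702.01803 — 2 statements merged into one kernel-verified Lean document; each statement's English description precedes it below -/
import Mathlib

section
/- Greedy selection for submodular monotone revenue: if R is a monotone submodular set function on subsets of a finite set B with R(∅) = 0, then the greedy algorithm that iteratively adds the element with maximum marginal gain produces, after k steps, a set G_k with R(G_k) ≥ (1 − (1 − 1/k)^k)·max_{|S| ≤ k} R(S) ≥ (1 − 1/e)·max_{|S| ≤ k} R(S). -/
open Finset

/-- telescoping bound for submodular functions -/
lemma submod_union_bound {B : Type*} [Fintype B] [DecidableEq B]
    (R : Finset B → ℝ)
    (hsub : ∀ S T : Finset B, S ⊆ T → ∀ i ∉ T,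
      R (insert i T) - R T ≤ R (insert i S) - R S)
    (A : Finset B) (d : ℝ) (hd : 0 ≤ d)
    (hgain : ∀ i : B, i ∉ A → R (insert i A) - R A ≤ d) :
    ∀ T : Finset B, R (A ∪ T) - R A ≤ T.card * d := by
  intro T
  induction T using Finset.induction_on with
  | empty => simp
  | @insert i T hiT ih =>
    rw [Finset.card_insert_of_notMem hiT]
    have hu : A ∪ insert i T = insert i (A ∪ T) := by
      ext x; simp [or_comm, or_assoc, or_left_comm]
    rw [hu]
    by_cases hi : i ∈ A ∪ T
    · rw [Finset.insert_eq_self.mpr hi]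
      calc R (A ∪ T) - R A ≤ T.card * d := ih
        _ ≤ ((T.card : ℝ) + 1) * d := by nlinarith
        _ = ((T.card + 1 : ℕ) : ℝ) * d := by push_cast; ring
    · have hiA : i ∉ A := fun h => hi (Finset.mem_union_left _ h)
      have h1 : R (insert i (A ∪ T)) - R (A ∪ T) ≤ R (insert i A) - R A :=
        hsub A (A ∪ T) Finset.subset_union_left i hi
      have h2 := hgain i hiA
      push_cast
      linarith

/-- Greedy guarantee for monotone submodular set functions (Nemhauser–Wolsey–Fisher):
if `R` is monotone and submodular with `R ∅ = 0`, and `G` is a greedy sequence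
(`G 0 = ∅`, and `G (j+1)` adds an element of maximum marginal gain), then for every
`k ≥ 1` and every `S` with `|S| ≤ k`,
`R (G k) ≥ (1 − (1 − 1/k)^k) · R S ≥ (1 − 1/e) · R S`. -/
theorem greedy_submodular_guarantee {B : Type*} [Fintype B] [DecidableEq B]
    (R : Finset B → ℝ)
    (hmono : ∀ S T : Finset B, S ⊆ T → R S ≤ R T)
    (hsub : ∀ S T : Finset B, S ⊆ T → ∀ i ∉ T,
      R (insert i T) - R T ≤ R (insert i S) - R S)
    (hempty : R ∅ = 0)
    (G : ℕ → Finset B)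
    (hG0 : G 0 = ∅)
    (hGstep : ∀ j : ℕ, ∃ i : B, G (j + 1) = insert i (G j) ∧
      ∀ i' : B, R (insert i' (G j)) ≤ R (insert i (G j))) :
    ∀ k : ℕ, 1 ≤ k → ∀ S : Finset B, S.card ≤ k →
      (1 - (1 - 1 / (k : ℝ)) ^ k) * R S ≤ R (G k) ∧
      (1 - 1 / Real.exp 1) * R S ≤ R (G k) := by
  intro k hk S hS
  have hkR : (1 : ℝ) ≤ (k : ℝ) := by exact_mod_cast hk
  have hkpos : (0 : ℝ) < (k : ℝ) := by linarith
  set r : ℝ := 1 - 1 / (k : ℝ) with hr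
  have hr0 : 0 ≤ r := by
    have h : 1 / (k : ℝ) ≤ 1 := by
      rw [div_le_one hkpos]; exact hkR
    rw [hr]; linarith
  have hm0 : 0 ≤ R S := by
    have := hmono ∅ S (Finset.empty_subset S); linarith
  -- key per-step inequality
  have hstep : ∀ j : ℕ, R S - R (G (j + 1)) ≤ r * (R S - R (G j)) := by
    intro j
    obtain ⟨i, hGi, hmax⟩ := hGstep j
    set d : ℝ := R (G (j + 1)) - R (G j) with hd
    have hd0 : 0 ≤ d := by
      have := hmono (G j) (G (j + 1)) (by rw [hGi]; exact Finset.subset_insert _ _)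
      linarith
    have hgain : ∀ i' : B, i' ∉ G j → R (insert i' (G j)) - R (G j) ≤ d := by
      intro i' _
      have := hmax i'
      rw [hd, hGi]; linarith
    have hb := submod_union_bound R hsub (G j) d hd0 hgain S
    have hSsub : R S ≤ R (G j ∪ S) := hmono S _ Finset.subset_union_right
    have hcard : (S.card : ℝ) ≤ (k : ℝ) := by exact_mod_cast hS
    have h1 : R S - R (G j) ≤ (k : ℝ) * d := by
      have : (S.card : ℝ) * d ≤ (k : ℝ) * d := by nlinarith
      linarith
    -- r * (R S - R (G j)) = R S - R (G j) - (R S - R (G j))/k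
    have h2 : (R S - R (G j)) / (k : ℝ) ≤ d := by
      rw [div_le_iff₀ hkpos]; linarith [mul_comm d (k : ℝ)]
    have : r * (R S - R (G j)) = (R S - R (G j)) - (R S - R (G j)) / (k : ℝ) := by
      rw [hr]; ring
    rw [this, hd] at *
    linarith
  -- iterate
  have hiter : ∀ j : ℕ, R S - R (G j) ≤ r ^ j * R S := by
    intro j
    induction j with
    | zero => simp [hG0, hempty]
    | succ n ih =>
      calc R S - R (G (n + 1)) ≤ r * (R S - R (G n)) := hstep n
        _ ≤ r * (r ^ n * R S) := by
            exact mul_le_mul_of_nonneg_left ih hr0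
        _ = r ^ (n + 1) * R S := by ring
  have hmain : (1 - r ^ k) * R S ≤ R (G k) := by
    have := hiter k; nlinarith
  refine ⟨hmain, ?_⟩
  -- (1-1/k)^k ≤ 1/e
  have hrk : r ^ k ≤ 1 / Real.exp 1 := by
    have h1 : r ≤ Real.exp (-(1 / (k : ℝ))) := by
      have := Real.add_one_le_exp (-(1 / (k : ℝ)))
      rw [hr]; linarith
    have h2 : r ^ k ≤ (Real.exp (-(1 / (k : ℝ)))) ^ k :=
      pow_le_pow_left₀ hr0 h1 k
    have h3 : (Real.exp (-(1 / (k : ℝ)))) ^ k = Real.exp ((k : ℝ) * (-(1 / (k : ℝ)))) := by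
      rw [← Real.exp_nat_mul]
    have h4 : (k : ℝ) * (-(1 / (k : ℝ))) = -1 := by
      field_simp
    rw [h3, h4] at h2
    rw [Real.exp_neg] at h2
    rw [one_div]
    exact h2
  have : (1 - 1 / Real.exp 1) * R S ≤ (1 - r ^ k) * R S := by nlinarith
  linarith
end

section
/- In the 3-dimensional-matching reduction: given disjoint finite sets X, Z and Y with edges E ⊆ (X ∪ Z) × Y, construct an auction instance where each bidder b_x (x ∈ X ∪ Z) has quota 1 and bids 1 on item i_y iff (x,y) ∈ E (else 0), with zero reserve and second-price rules. Then the revenue of a feasible assignment (each bidder assigned to at most one item) equals the number of items receiving at least two bids of 1 from their assigned bidders. In particular, assigning two connected bidders to an item yields revenue 1 from that item, and the maximum total revenue over quota-feasible assignments is at least the size of any matching in which each matched item receives two adjacent bidders. -/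
open Finset

open Classical in
/-- The second-highest value in a multiset of reals (0 if the multiset has at most one
element): sort ascending and take the next-to-last entry. -/
noncomputable def secondHighest (s : Multiset ℝ) : ℝ :=
  if Multiset.card s ≤ 1 then 0 else (s.sort (· ≤ ·)).getD (Multiset.card s - 2) 0

/-- In the 3-dimensional-matching reduction, bidder `v` bids 1 on item `y` iff `(v, y)`
is an edge, else 0. -/
noncomputable def edgeBid {V Y : Type*} (Ed : V → Y → Prop) [∀ v y, Decidable (Ed v y)]
    (v : V) (y : Y) : ℝ :=
  if Ed v y then 1 else 0

/-- Second-price (zero-reserve) revenue of item `y` under the quota-1 assignment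
`f : V → Option Y`: the second-highest bid among the bidders assigned to `y`. -/
noncomputable def itemRevenue {V Y : Type*} [Fintype V] [DecidableEq Y]
    (Ed : V → Y → Prop) [∀ v y, Decidable (Ed v y)] (f : V → Option Y) (y : Y) : ℝ :=
  secondHighest (((Finset.univ.filter (fun v => f v = some y)).1).map (fun v => edgeBid Ed v y))

lemma sorted01 (l : List ℝ) (hl : l.Pairwise (· ≤ ·)) (h01 : ∀ x ∈ l, x = 0 ∨ x = 1) :
    l = List.replicate (l.count 0) 0 ++ List.replicate (l.count 1) 1 := by
  classical
  induction l with
  | nil => simp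
  | cons x xs ih =>
    rcases List.pairwise_cons.1 hl with ⟨hx, hs⟩
    rcases h01 x (.head _) with rfl | rfl
    · have h := ih hs (fun z hz => h01 z (.tail _ hz))
      rw [List.count_cons_self, List.count_cons_of_ne (by norm_num)]
      rw [List.replicate_succ]
      simpa using h
    · have hall : ∀ z ∈ xs, z = 1 := by
        intro z hz
        rcases h01 z (.tail _ hz) with rfl | rfl
        · exact absurd (hx _ hz) (by norm_num)
        · rfl
      have h0 : xs.count (0:ℝ) = 0 := by
        rw [List.count_eq_zero]
        intro h; simpa using hall 0 h
      have h1 : xs.count (1:ℝ) = xs.length := by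
        rw [List.count_eq_length]
        intro z hz; exact (hall z hz).symm
      rw [List.count_cons_of_ne (by norm_num), List.count_cons_self, h0, h1]
      simp [List.replicate_succ]
      exact List.eq_replicate_of_mem hall

lemma secondHighest_01 (s : Multiset ℝ) (h01 : ∀ x ∈ s, x = 0 ∨ x = 1) :
    secondHighest s = if 2 ≤ s.count 1 then 1 else 0 := by
  classical
  unfold secondHighest
  by_cases h : Multiset.card s ≤ 1
  · have hc : s.count 1 ≤ 1 := le_trans (Multiset.count_le_card _ _) h
    rw [if_pos h, if_neg (by omega)]
  · rw [if_neg h]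
    set l := s.sort (· ≤ ·) with hldef
    have hl : l.Pairwise (· ≤ ·) := s.pairwise_sort _
    have hlen : l.length = Multiset.card s := s.length_sort _
    have hmem : ∀ x ∈ l, x = 0 ∨ x = 1 := fun x hx => h01 x ((Multiset.mem_sort _).1 hx)
    have hcnt : l.count (1:ℝ) = s.count 1 := by
      rw [← Multiset.coe_count, Multiset.sort_eq]
    set a := l.count (0:ℝ) with ha
    set b := l.count (1:ℝ) with hb
    have hab : a + b = Multiset.card s := by
      rw [← hlen]
      have := sorted01 l hl hmem
      conv_rhs => rw [this]
      simp [a, b]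
    have hrep := sorted01 l hl hmem
    rw [hrep]
    rw [← hcnt]
    by_cases h2 : 2 ≤ b
    · rw [if_pos h2]
      rw [List.getD_append_right _ _ _ _ (by simp; omega)]
      have hidx : Multiset.card s - 2 - (List.replicate a (0:ℝ)).length = b - 2 := by
        simp; omega
      rw [hidx, List.getD_eq_getElem _ _ (by simp; omega), List.getElem_replicate]
    · rw [if_neg h2]
      rw [List.getD_append _ _ _ _ (by simp; omega)]
      rw [List.getD_eq_getElem _ _ (by simp; omega), List.getElem_replicate]

lemma itemRevenue_eq {V Y : Type*} [Fintype V] [DecidableEq Y]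
    (Ed : V → Y → Prop) [∀ v y, Decidable (Ed v y)] (f : V → Option Y) (y : Y) :
    itemRevenue Ed f y =
      if 2 ≤ (Finset.univ.filter (fun v : V => f v = some y ∧ Ed v y)).card then 1 else 0 := by
  classical
  unfold itemRevenue
  rw [secondHighest_01]
  · congr 1
    have : (((Finset.univ.filter (fun v => f v = some y)).1).map
        (fun v => edgeBid Ed v y)).count 1
        = (Finset.univ.filter (fun v : V => f v = some y ∧ Ed v y)).card := by
      rw [Multiset.count_map]
      rw [← Finset.filter_val, Finset.filter_filter]
      rw [Finset.card_def]
      have heq : Finset.filter (fun a => f a = some y ∧ 1 = edgeBid Ed a y) Finset.univ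
          = Finset.filter (fun v : V => f v = some y ∧ Ed v y) Finset.univ := by
        ext v
        simp only [Finset.mem_filter, Finset.mem_univ, true_and]
        unfold edgeBid
        constructor
        · rintro ⟨h1, h2⟩
          refine ⟨h1, ?_⟩
          by_contra hEd
          rw [if_neg hEd] at h2
          norm_num at h2
        · rintro ⟨h1, h2⟩
          exact ⟨h1, by rw [if_pos h2]⟩
      rw [heq]
    rw [this]
  · intro x hx
    rcases Multiset.mem_map.1 hx with ⟨v, _, rfl⟩
    unfold edgeBid
    split <;> simp

/-- 3-dimensional-matching reduction: with 0/1 bids given by the edge relation, quota 1,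
zero reserve and second-price rules, (i) the total revenue of any feasible assignment `f`
equals the number of items receiving at least two bids of 1 from their assigned bidders,
and (ii) given a matching `M` of items in which each matched item `y` receives two
distinct adjacent bidders `g₁ y, g₂ y` (all distinct across matched items), some feasible
assignment attains total revenue at least `|M|`. -/
theorem three_dim_matching_reduction {V Y : Type*} [Fintype V] [Fintype Y]
    [DecidableEq V] [DecidableEq Y]
    (Ed : V → Y → Prop) [∀ v y, Decidable (Ed v y)]
    (M : Finset Y) (g₁ g₂ : Y → V)
    (hadj : ∀ y ∈ M, g₁ y ≠ g₂ y ∧ Ed (g₁ y) y ∧ Ed (g₂ y) y)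
    (hdisj : ∀ y ∈ M, ∀ y' ∈ M, y ≠ y' →
      Disjoint ({g₁ y, g₂ y} : Finset V) ({g₁ y', g₂ y'} : Finset V)) :
    (∀ f : V → Option Y,
      ∑ y, itemRevenue Ed f y =
        ((Finset.univ.filter (fun y : Y =>
          2 ≤ (Finset.univ.filter (fun v : V => f v = some y ∧ Ed v y)).card)).card : ℝ)) ∧
    (∃ f : V → Option Y, (M.card : ℝ) ≤ ∑ y, itemRevenue Ed f y) := by
  classical
  have part1 : ∀ f : V → Option Y,
      ∑ y, itemRevenue Ed f y =
        ((Finset.univ.filter (fun y : Y =>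
          2 ≤ (Finset.univ.filter (fun v : V => f v = some y ∧ Ed v y)).card)).card : ℝ) := by
    intro f
    simp only [itemRevenue_eq]
    rw [Finset.sum_boole]
  refine ⟨part1, ?_⟩
  set f : V → Option Y := fun v =>
    if h : ∃ y, y ∈ M ∧ (v = g₁ y ∨ v = g₂ y) then some h.choose else none with hf
  refine ⟨f, ?_⟩
  rw [part1 f]
  have hfy : ∀ y ∈ M, ∀ v : V, (v = g₁ y ∨ v = g₂ y) → f v = some y := by
    intro y hy v hv
    have hex : ∃ y', y' ∈ M ∧ (v = g₁ y' ∨ v = g₂ y') := ⟨y, hy, hv⟩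
    rw [hf]
    simp only [dif_pos hex]
    congr 1
    obtain ⟨hy', hv'⟩ := hex.choose_spec
    by_contra hne
    have hd := hdisj y hy _ hy' (Ne.symm hne)
    have h1 : v ∈ ({g₁ y, g₂ y} : Finset V) := by
      rcases hv with rfl | rfl <;> simp
    have h2 : v ∈ ({g₁ hex.choose, g₂ hex.choose} : Finset V) := by
      rcases hv' with h | h
      · exact Finset.mem_insert.2 (Or.inl h)
      · exact Finset.mem_insert.2 (Or.inr (Finset.mem_singleton.2 h))
    exact (Finset.disjoint_left.1 hd h1) h2
  have hsub : M ⊆ Finset.univ.filter (fun y : Y =>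
      2 ≤ (Finset.univ.filter (fun v : V => f v = some y ∧ Ed v y)).card) := by
    intro y hy
    rw [Finset.mem_filter]
    refine ⟨Finset.mem_univ _, ?_⟩
    obtain ⟨hne, hE1, hE2⟩ := hadj y hy
    have hsub2 : ({g₁ y, g₂ y} : Finset V) ⊆
        Finset.univ.filter (fun v : V => f v = some y ∧ Ed v y) := by
      intro v hv
      rw [Finset.mem_insert, Finset.mem_singleton] at hv
      rw [Finset.mem_filter]
      refine ⟨Finset.mem_univ _, hfy y hy v hv, ?_⟩
      rcases hv with rfl | rfl <;> assumption
    calc 2 = ({g₁ y, g₂ y} : Finset V).card := (Finset.card_pair hne).symm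
      _ ≤ _ := Finset.card_le_card hsub2
  exact_mod_cast Finset.card_le_card hsub
end
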